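/- Let Σ be a p×p real positive semidefinite matrix with rank(Σ) > k for an integer 0 ≤ k ≤ p−1 satisfying k < srank₄(Σ). Assume there is a set S ⊆ {1,…,p} with |S| ≥ k such that ‖Σ^{1/2}e_i‖₂² ≥ tr(Σ)/(4p) for every i ∈ S, where (e_i) is the standard basis of ℝ^p. Then srank₄(Σ^{1/2}) ≥ (16p²/(4p−k)²) · (1 − √(k/srank₄(Σ))) · R_k(Σ). -/

import Mathlib

open Matrix Finset

open scoped ComplexOrder in
/-- The positive semidefinite square root, as defined in the older Mathlib
(`Matrix.PosSemidef.sqrt`, since removed). -/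
noncomputable def Matrix.PosSemidef.sqrt {n 𝕜 : Type*} [Fintype n] [DecidableEq n] [RCLike 𝕜]
    {A : Matrix n n 𝕜} (hA : A.PosSemidef) : Matrix n n 𝕜 :=
  hA.1.eigenvectorUnitary.1 * diagonal ((↑) ∘ (√·) ∘ hA.1.eigenvalues) *
  (star hA.1.eigenvectorUnitary : Matrix n n 𝕜)

lemma sqrt_symm_aux {p : ℕ} {A : Matrix (Fin p) (Fin p) ℝ} (hA : A.PosSemidef) (a b : Fin p) :
    hA.sqrt a b = hA.sqrt b a := by
  have h : (hA.sqrt)ᴴ = hA.sqrt := by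
    unfold Matrix.PosSemidef.sqrt
    simp [Matrix.conjTranspose_mul, Matrix.mul_assoc, Matrix.star_eq_conjTranspose,
      Matrix.diagonal_conjTranspose]
  have := congrFun (congrFun h b) a
  simpa using this

lemma sqrt_mul_self_aux {p : ℕ} {A : Matrix (Fin p) (Fin p) ℝ} (hA : A.PosSemidef) :
    hA.sqrt * hA.sqrt = A := by
  have hV : (star hA.1.eigenvectorUnitary : Matrix (Fin p) (Fin p) ℝ) *
      (hA.1.eigenvectorUnitary : Matrix (Fin p) (Fin p) ℝ) = 1 := hA.1.eigenvectorUnitary.2.1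
  have hDD : diagonal ((RCLike.ofReal : ℝ → ℝ) ∘ (√·) ∘ hA.1.eigenvalues) * diagonal ((RCLike.ofReal : ℝ → ℝ) ∘ (√·) ∘ hA.1.eigenvalues)
      = diagonal (RCLike.ofReal ∘ hA.1.eigenvalues : Fin p → ℝ) := by
    rw [Matrix.diagonal_mul_diagonal]
    congr 1
    funext i
    simp [Real.mul_self_sqrt (hA.eigenvalues_nonneg i)]
  unfold Matrix.PosSemidef.sqrt
  conv_rhs => rw [hA.1.spectral_theorem, Unitary.conjStarAlgAut_apply]
  calc _ = (hA.1.eigenvectorUnitary : Matrix (Fin p) (Fin p) ℝ) *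
        (diagonal ((RCLike.ofReal : ℝ → ℝ) ∘ (√·) ∘ hA.1.eigenvalues) *
        ((star hA.1.eigenvectorUnitary : Matrix (Fin p) (Fin p) ℝ) *
        (hA.1.eigenvectorUnitary : Matrix (Fin p) (Fin p) ℝ)) *
        diagonal ((RCLike.ofReal : ℝ → ℝ) ∘ (√·) ∘ hA.1.eigenvalues)) *
        (star hA.1.eigenvectorUnitary : Matrix (Fin p) (Fin p) ℝ) := by
          simp only [Matrix.mul_assoc]
    _ = _ := by rw [hV, Matrix.mul_one, hDD]

/-- Key rearrangement lemma: a `[0,1]`-weighted sum of an antitone nonnegative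
sequence with total weight `k` is at most the sum of the first `k` terms. -/
lemma head_bound {p k : ℕ} (hkp : k < p) (lam : Fin p → ℝ) (hanti : Antitone lam)
    (hpos : ∀ j, 0 ≤ lam j) (w : Fin p → ℝ) (hw0 : ∀ j, 0 ≤ w j) (hw1 : ∀ j, w j ≤ 1)
    (hsum : ∑ j, w j = k) :
    ∑ j, w j * lam j ≤ ∑ j ∈ Finset.univ.filter (fun j : Fin p => (j : ℕ) < k), lam j := by
  classical
  set H : Finset (Fin p) := Finset.univ.filter (fun j : Fin p => (j : ℕ) < k) with hH
  set t : ℝ := lam ⟨k, hkp⟩ with ht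
  have hHcard : H.card = k := by
    have : H = Finset.Iio (⟨k, hkp⟩ : Fin p) := by
      ext j; simp [hH, Fin.lt_def]
    rw [this, Fin.card_Iio]
  have hsplit : ∑ j ∈ H, w j * lam j + ∑ j ∈ Finset.univ.filter (fun j : Fin p => ¬ (j : ℕ) < k), w j * lam j = ∑ j, w j * lam j :=
    Finset.sum_filter_add_sum_filter_not _ _ _
  have hsplitw : ∑ j ∈ H, w j + ∑ j ∈ Finset.univ.filter (fun j : Fin p => ¬ (j : ℕ) < k), w j = ∑ j, w j :=
    Finset.sum_filter_add_sum_filter_not _ _ _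
  have htail : ∑ j ∈ Finset.univ.filter (fun j : Fin p => ¬ (j : ℕ) < k), w j * lam j
      ≤ t * ∑ j ∈ Finset.univ.filter (fun j : Fin p => ¬ (j : ℕ) < k), w j := by
    rw [Finset.mul_sum]
    apply Finset.sum_le_sum
    intro j hj
    simp only [Finset.mem_filter, Finset.mem_univ, true_and, not_lt] at hj
    have hle : lam j ≤ t := hanti (by simpa [Fin.le_def] using hj)
    calc w j * lam j ≤ w j * t := mul_le_mul_of_nonneg_left hle (hw0 j)
      _ = t * w j := mul_comm _ _
  have hkeq : (k : ℝ) = ∑ _j ∈ H, (1 : ℝ) := by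
    simp [hHcard]
  have hfin : ∑ j ∈ H, w j * lam j + t * ((k : ℝ) - ∑ j ∈ H, w j) ≤ ∑ j ∈ H, lam j := by
    have : ∑ j ∈ H, w j * lam j + t * ((k : ℝ) - ∑ j ∈ H, w j)
        = ∑ j ∈ H, (w j * lam j + t * (1 - w j)) := by
      rw [Finset.sum_add_distrib, hkeq, ← Finset.sum_sub_distrib, Finset.mul_sum]
    rw [this]
    apply Finset.sum_le_sum
    intro j hj
    simp only [hH, Finset.mem_filter, Finset.mem_univ, true_and] at hj
    have hlt : t ≤ lam j := hanti (by simp [Fin.le_def]; omega)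
    nlinarith [hw0 j, hw1 j, hpos j]
  have hw' : ∑ j ∈ Finset.univ.filter (fun j : Fin p => ¬ (j : ℕ) < k), w j = (k : ℝ) - ∑ j ∈ H, w j := by
    rw [← hsum]
    linarith [hsplitw]
  calc ∑ j, w j * lam j
      = ∑ j ∈ H, w j * lam j + ∑ j ∈ Finset.univ.filter (fun j : Fin p => ¬ (j : ℕ) < k), w j * lam j := hsplit.symm
    _ ≤ ∑ j ∈ H, w j * lam j + t * ((k : ℝ) - ∑ j ∈ H, w j) := by rw [← hw']; linarith [htail]
    _ ≤ ∑ j ∈ H, lam j := hfin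

set_option maxHeartbeats 800000 in
/-- lower bound on the stable rank of `Σ^{1/2}` in terms of the
effective rank `R_k(Σ)` and the stable rank of `Σ`.  Here `lam` lists the
eigenvalues of the positive semidefinite matrix `A = Σ` in nonincreasing order
(witnessed by an orthogonal diagonalization), `A.rank > k`, `k < srank₄(Σ)`,
and at least `k` columns of `Σ^{1/2}` have squared Euclidean norm at least
`tr(Σ)/(4p)`. -/
theorem stmt0 (p k : ℕ) (hk : k ≤ p - 1)
    (A : Matrix (Fin p) (Fin p) ℝ) (hA : A.PosSemidef)
    (lam : Fin p → ℝ) (hanti : Antitone lam)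
    (U : Matrix (Fin p) (Fin p) ℝ) (hU : U * Uᵀ = 1)
    (hdiag : A = U * Matrix.diagonal lam * Uᵀ)
    (hrank : k < A.rank)
    (hksrank : (k : ℝ) < (∑ i, lam i ^ 2) ^ 2 / (∑ i, lam i ^ 4))
    (S : Finset (Fin p)) (hcard : k ≤ S.card)
    (hS : ∀ i ∈ S, A.trace / (4 * p) ≤ ∑ j, hA.sqrt j i ^ 2) :
    16 * (p : ℝ) ^ 2 / (4 * (p : ℝ) - k) ^ 2 *
        (1 - Real.sqrt ((k : ℝ) / ((∑ i, lam i ^ 2) ^ 2 / (∑ i, lam i ^ 4)))) *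
        ((∑ i ∈ Finset.univ.filter (fun i : Fin p => k ≤ (i : ℕ)), lam i) ^ 2 /
          (∑ i ∈ Finset.univ.filter (fun i : Fin p => k ≤ (i : ℕ)), lam i ^ 2))
      ≤ (∑ i, lam i) ^ 2 / (∑ i, lam i ^ 2) := by
  classical
  have hUtU : Uᵀ * U = 1 := mul_eq_one_comm.mp hU
  -- p > 0
  have hp : 0 < p := by
    rcases Nat.eq_zero_or_pos p with h0 | h
    · exfalso; subst h0
      simp at hksrank
      exact absurd hksrank (not_lt.mpr (Nat.cast_nonneg k))
    · exact h
  have hkp : k < p := by omega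
  -- eigenvalues are nonnegative
  have hD : Uᵀ * A * U = Matrix.diagonal lam := by
    rw [hdiag]
    calc Uᵀ * (U * Matrix.diagonal lam * Uᵀ) * U
        = (Uᵀ * U) * Matrix.diagonal lam * (Uᵀ * U) := by noncomm_ring
      _ = Matrix.diagonal lam := by rw [hUtU, one_mul, mul_one]
  have hdiagPSD : (Matrix.diagonal lam).PosSemidef := by
    rw [← hD, ← Matrix.conjTranspose_eq_transpose_of_trivial U]
    exact hA.conjTranspose_mul_mul_same U
  have hlam : ∀ j, 0 ≤ lam j := Matrix.posSemidef_diagonal_iff.mp hdiagPSD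
  -- notation
  set T := ∑ i, lam i with hT
  set Q := ∑ i, lam i ^ 2 with hQdef
  set F := ∑ i, lam i ^ 4 with hF
  set s := ∑ i ∈ Finset.univ.filter (fun i : Fin p => k ≤ (i : ℕ)), lam i with hs
  set q := ∑ i ∈ Finset.univ.filter (fun i : Fin p => k ≤ (i : ℕ)), lam i ^ 2 with hq
  set hd := ∑ i ∈ Finset.univ.filter (fun i : Fin p => (i : ℕ) < k), lam i with hhd
  set hd2 := ∑ i ∈ Finset.univ.filter (fun i : Fin p => (i : ℕ) < k), lam i ^ 2 with hhd2
  -- positivity facts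
  have hF0 : 0 < F := by
    by_contra hc
    push_neg at hc
    have hF0' : F = 0 := le_antisymm hc (Finset.sum_nonneg fun i _ => by positivity)
    rw [hF0'] at hksrank
    simp at hksrank
    exact absurd hksrank (not_lt.mpr (Nat.cast_nonneg k))
  have hQ0 : 0 < Q := by
    rcases lt_or_eq_of_le (Finset.sum_nonneg (fun i (_ : i ∈ Finset.univ) => sq_nonneg (lam i)) : (0:ℝ) ≤ Q) with h | h
    · exact h
    · exfalso
      have hz : ∀ i ∈ Finset.univ, lam i ^ 2 = 0 :=
        (Finset.sum_eq_zero_iff_of_nonneg (fun i _ => sq_nonneg (lam i))).mp h.symm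
      have : F = 0 := Finset.sum_eq_zero fun i _ => by
        have := hz i (Finset.mem_univ i); nlinarith [this]
      linarith
  have hkF : (k : ℝ) * F < Q ^ 2 := by
    rw [lt_div_iff₀ hF0] at hksrank
    linarith
  -- trace of A
  have htrace : A.trace = T := by
    rw [hdiag, Matrix.trace_mul_comm (U * Matrix.diagonal lam) Uᵀ, ← Matrix.mul_assoc, hUtU,
      one_mul, Matrix.trace_diagonal]
  -- diagonal entries of A
  have hAdiag : ∀ i, A i i = ∑ j, (U i j) ^ 2 * lam j := by
    intro i
    rw [hdiag, Matrix.mul_apply]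
    apply Finset.sum_congr rfl
    intro j _
    rw [Matrix.mul_diagonal, Matrix.transpose_apply]
    ring
  -- column norms of the sqrt are the diagonal entries
  have hsqrtcol : ∀ i, ∑ j, hA.sqrt j i ^ 2 = A i i := by
    intro i
    have hsym : ∀ a b, hA.sqrt a b = hA.sqrt b a := by
      intro a b
      exact sqrt_symm_aux hA a b
    calc ∑ j, hA.sqrt j i ^ 2 = ∑ j, hA.sqrt i j * hA.sqrt j i := by
          apply Finset.sum_congr rfl
          intro j _
          rw [sq]
          nth_rewrite 1 [hsym j i]
          rfl
      _ = (hA.sqrt * hA.sqrt) i i := (Matrix.mul_apply).symm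
      _ = A i i := by rw [sqrt_mul_self_aux hA]
  -- choose a subset of S of cardinality k
  obtain ⟨S', hS'sub, hS'card⟩ := Finset.exists_subset_card_eq hcard
  set w : Fin p → ℝ := fun j => ∑ i ∈ S', (U i j) ^ 2 with hw
  have hw0 : ∀ j, 0 ≤ w j := fun j => Finset.sum_nonneg fun i _ => sq_nonneg _
  have hUcol : ∀ j, ∑ i, (U i j) ^ 2 = 1 := by
    intro j
    have h1 := congrArg (fun M : Matrix (Fin p) (Fin p) ℝ => M j j) hUtU
    simpa [Matrix.mul_apply, Matrix.one_apply, sq] using h1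
  have hUrow : ∀ i, ∑ j, (U i j) ^ 2 = 1 := by
    intro i
    have h1 := congrArg (fun M : Matrix (Fin p) (Fin p) ℝ => M i i) hU
    simpa [Matrix.mul_apply, Matrix.one_apply, sq] using h1
  have hw1 : ∀ j, w j ≤ 1 := by
    intro j
    calc w j ≤ ∑ i, (U i j) ^ 2 :=
          Finset.sum_le_sum_of_subset_of_nonneg (Finset.subset_univ S') fun i _ _ => sq_nonneg _
      _ = 1 := hUcol j
  have hsumw : ∑ j, w j = (k : ℝ) := by
    rw [hw]
    rw [Finset.sum_comm]
    have : ∀ i ∈ S', ∑ j, (U i j) ^ 2 = 1 := fun i _ => hUrow i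
    rw [Finset.sum_congr rfl this, Finset.sum_const, hS'card]
    simp
  have hheadA : ∑ i ∈ S', A i i = ∑ j, w j * lam j := by
    have h1 : ∀ i ∈ S', A i i = ∑ j, (U i j) ^ 2 * lam j := fun i _ => hAdiag i
    rw [Finset.sum_congr rfl h1, Finset.sum_comm]
    apply Finset.sum_congr rfl
    intro j _
    rw [hw, Finset.sum_mul]
  have hkey : ∑ i ∈ S', A i i ≤ hd := by
    rw [hheadA, hhd]
    exact head_bound hkp lam hanti hlam w hw0 hw1 hsumw
  have hlower : (k : ℝ) * (T / (4 * p)) ≤ ∑ i ∈ S', A i i := by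
    have h1 : ∀ i ∈ S', T / (4 * (p : ℝ)) ≤ A i i := by
      intro i hi
      have h2 := hS i (hS'sub hi)
      rw [htrace, hsqrtcol i] at h2
      exact h2
    calc (k : ℝ) * (T / (4 * p)) = ∑ _i ∈ S', T / (4 * (p : ℝ)) := by
          rw [Finset.sum_const, hS'card]; simp [mul_comm]
      _ ≤ ∑ i ∈ S', A i i := Finset.sum_le_sum h1
  have h4p : (0 : ℝ) < 4 * p := by positivity
  have hkT : (k : ℝ) * T ≤ 4 * (p : ℝ) * hd := by
    have h2 := hlower.trans hkey
    rw [mul_div_assoc'] at h2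
    rw [div_le_iff₀ h4p] at h2
    linarith
  -- splits
  have hTsplit : hd + s = T := by
    have h1 := Finset.sum_filter_add_sum_filter_not Finset.univ (fun i : Fin p => (i : ℕ) < k) lam
    simpa [not_lt] using h1
  have hQsplit : hd2 + q = Q := by
    have h1 := Finset.sum_filter_add_sum_filter_not Finset.univ (fun i : Fin p => (i : ℕ) < k)
      (fun i => lam i ^ 2)
    simpa [not_lt] using h1
  have hs0 : 0 ≤ s := Finset.sum_nonneg fun i _ => hlam i
  have hd0 : 0 ≤ hd := Finset.sum_nonneg fun i _ => hlam i
  have hd20 : 0 ≤ hd2 := Finset.sum_nonneg fun i _ => sq_nonneg _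
  have hT0 : 0 ≤ T := Finset.sum_nonneg fun i _ => hlam i
  -- Cauchy–Schwarz bound on the head
  have hHcard : (Finset.univ.filter (fun j : Fin p => (j : ℕ) < k)).card = k := by
    have h1 : (Finset.univ.filter (fun j : Fin p => (j : ℕ) < k)) = Finset.Iio (⟨k, hkp⟩ : Fin p) := by
      ext j; simp [Fin.lt_def]
    rw [h1, Fin.card_Iio]
  have hcs : hd2 ^ 2 ≤ (k : ℝ) * F := by
    have h1 := sq_sum_le_card_mul_sum_sq (s := Finset.univ.filter (fun j : Fin p => (j : ℕ) < k))
      (f := fun i => lam i ^ 2)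
    rw [hHcard] at h1
    have h2 : ∑ i ∈ Finset.univ.filter (fun j : Fin p => (j : ℕ) < k), (lam i ^ 2) ^ 2 ≤ F := by
      rw [hF]
      calc ∑ i ∈ Finset.univ.filter (fun j : Fin p => (j : ℕ) < k), (lam i ^ 2) ^ 2
          = ∑ i ∈ Finset.univ.filter (fun j : Fin p => (j : ℕ) < k), lam i ^ 4 :=
            Finset.sum_congr rfl fun i _ => by ring
        _ ≤ ∑ i, lam i ^ 4 :=
            Finset.sum_le_sum_of_subset_of_nonneg (Finset.subset_univ _) fun i _ _ => by positivity
    nlinarith [h1, h2, Nat.cast_nonneg (α := ℝ) k]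
  have hhd2' : hd2 ≤ Real.sqrt ((k : ℝ) * F) := by
    rw [← Real.sqrt_sq hd20]
    exact Real.sqrt_le_sqrt hcs
  -- the square root term
  set r := Real.sqrt ((k : ℝ) / (Q ^ 2 / F)) with hrdef
  have hr : r = Real.sqrt ((k : ℝ) * F) / Q := by
    rw [hrdef, div_div_eq_mul_div, Real.sqrt_div (mul_nonneg (Nat.cast_nonneg k) hF0.le), Real.sqrt_sq hQ0.le]
  have hr0 : 0 ≤ r := Real.sqrt_nonneg _
  have hsqlt : Real.sqrt ((k : ℝ) * F) < Q := by
    calc Real.sqrt ((k : ℝ) * F) < Real.sqrt (Q ^ 2) := Real.sqrt_lt_sqrt (by positivity) hkF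
      _ = Q := Real.sqrt_sq hQ0.le
  have hrlt : r < 1 := by rw [hr]; exact (div_lt_one hQ0).mpr hsqlt
  have hQq : Q * (1 - r) ≤ q := by
    have e : Q * (1 - Real.sqrt ((k : ℝ) * F) / Q) = Q - Real.sqrt ((k : ℝ) * F) := by
      field_simp
    rw [hr, e]
    linarith
  have hq0 : 0 < q := lt_of_lt_of_le (by nlinarith) hQq
  -- main inequality pieces
  have hd4 : (0 : ℝ) < 4 * (p : ℝ) - k := by
    have h1 : (k : ℝ) < p := by exact_mod_cast hkp
    have h2 : (0 : ℝ) ≤ (p : ℝ) := Nat.cast_nonneg p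
    linarith
  have hsT : 4 * (p : ℝ) * s ≤ (4 * (p : ℝ) - k) * T := by nlinarith [hkT]
  have stepA : (1 - r) * (s ^ 2 / q) ≤ s ^ 2 / Q := by
    rw [show (1 - r) * (s ^ 2 / q) = ((1 - r) * s ^ 2) / q from by ring, div_le_div_iff₀ hq0 hQ0]
    nlinarith [mul_le_mul_of_nonneg_left hQq (sq_nonneg s)]
  have stepC : 16 * (p : ℝ) ^ 2 / (4 * (p : ℝ) - k) ^ 2 * (s ^ 2 / Q) ≤ T ^ 2 / Q := by
    have h1 : (4 * (p : ℝ) * s) * (4 * (p : ℝ) * s) ≤ ((4 * (p : ℝ) - k) * T) * ((4 * (p : ℝ) - k) * T) :=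
      mul_le_mul hsT hsT (by positivity) (mul_nonneg hd4.le hT0)
    rw [div_mul_div_comm, div_le_div_iff₀ (by positivity) hQ0]
    have h2 := mul_le_mul_of_nonneg_right h1 hQ0.le
    linear_combination h2
  calc 16 * (p : ℝ) ^ 2 / (4 * (p : ℝ) - k) ^ 2 * (1 - r) * (s ^ 2 / q)
      = 16 * (p : ℝ) ^ 2 / (4 * (p : ℝ) - k) ^ 2 * ((1 - r) * (s ^ 2 / q)) := by ring
    _ ≤ 16 * (p : ℝ) ^ 2 / (4 * (p : ℝ) - k) ^ 2 * (s ^ 2 / Q) :=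
        mul_le_mul_of_nonneg_left stepA (by positivity)
    _ ≤ T ^ 2 / Q := stepC
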